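/- Let f(x) = ∑_{k=0}^{∞} c_k x^k be the unique formal power series over ℚ satisfying f(x) = 1 + x·f(2x + x²). Then for every k ∈ ℕ and every N ≥ k+1, k!·c_k equals the k-th derivative of the polynomial U(q;N) = ∑_{n=0}^{N-1} (−1)^n {q}_n evaluated at q = 1; i.e., the c_k are the coefficients of the expansion of U(q) in powers of q − 1. -/

import Mathlib

open Polynomial

/-- Formal substitution of a polynomial `g` with zero constant term into a formal power
series `f`: the `n`-th coefficient of `f(g)` is `∑_{k=0}^{n} c_k · (coeff of xⁿ in gᵏ)`;
since `g` has zero constant term, `gᵏ` contributes nothing to the coefficient of `xⁿ`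
for `k > n`, so this is the full formal substitution. -/
noncomputable def substPoly (g : Polynomial ℚ) (f : PowerSeries ℚ) : PowerSeries ℚ :=
  PowerSeries.mk fun n =>
    ∑ k ∈ Finset.range (n + 1), PowerSeries.coeff k f * (g ^ k).coeff n

/-- The Mahler factorial `{q}_n = ∏_{j=0}^{n-1} (1 - q^{2^j})` as a polynomial in `ℚ[q]`. -/
noncomputable def mahlerFacP (n : ℕ) : Polynomial ℚ :=
  ∏ j ∈ Finset.range n, (1 - X ^ 2 ^ j)

/-- The partial sum `U(q;N) = ∑_{n=0}^{N-1} (-1)^n {q}_n` in `ℚ[q]`. -/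
noncomputable def UpartP (N : ℕ) : Polynomial ℚ :=
  ∑ n ∈ Finset.range N, (-1 : Polynomial ℚ) ^ n * mahlerFacP n

lemma coeff_zero_of_X_pow_dvd {p : ℚ[X]} {j m : ℕ} (h : X ^ j ∣ p) (hm : m < j) :
    p.coeff m = 0 := by
  obtain ⟨r, rfl⟩ := h
  rw [mul_comm, coeff_mul_X_pow', if_neg (Nat.not_le.mpr hm)]

lemma coeff_comp_eq_sum (p g : ℚ[X]) (hg : g.coeff 0 = 0) (m : ℕ) :
    (p.comp g).coeff m = ∑ j ∈ Finset.range (m + 1), p.coeff j * (g ^ j).coeff m := by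
  have hX : (X : ℚ[X]) ∣ g := X_dvd_iff.mpr hg
  have hzero : ∀ j, m < j → p.coeff j * (g ^ j).coeff m = 0 := by
    intro j hj
    rw [coeff_zero_of_X_pow_dvd (pow_dvd_pow_of_dvd hX j) hj, mul_zero]
  have key : (p.comp g).coeff m
      = ∑ j ∈ Finset.range (p.natDegree + 1), p.coeff j * (g ^ j).coeff m := by
    rw [comp, eval₂_eq_sum_range, finset_sum_coeff]
    exact Finset.sum_congr rfl fun i _ => coeff_C_mul _
  rw [key]
  set B := max (p.natDegree + 1) (m + 1) with hB
  have h1 : ∑ j ∈ Finset.range (p.natDegree + 1), p.coeff j * (g ^ j).coeff m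
      = ∑ j ∈ Finset.range B, p.coeff j * (g ^ j).coeff m := by
    refine Finset.sum_subset (Finset.range_subset_range.mpr (le_max_left _ _)) ?_
    intro x _ hx
    rw [coeff_eq_zero_of_natDegree_lt (by simpa using Finset.mem_range.not.mp hx), zero_mul]
  have h2 : ∑ j ∈ Finset.range (m + 1), p.coeff j * (g ^ j).coeff m
      = ∑ j ∈ Finset.range B, p.coeff j * (g ^ j).coeff m := by
    refine Finset.sum_subset (Finset.range_subset_range.mpr (le_max_right _ _)) ?_
    intro x _ hx
    exact hzero x (by simpa using Finset.mem_range.not.mp hx)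
  rw [h1, ← h2]

lemma mahler_succ (n : ℕ) :
    mahlerFacP (n + 1) = (mahlerFacP n).comp (X ^ 2) * (1 - X) := by
  rw [mahlerFacP, Finset.prod_range_succ', mahlerFacP, prod_comp]
  congr 1
  · refine Finset.prod_congr rfl fun j _ => ?_
    rw [sub_comp, one_comp, pow_comp, X_comp, ← pow_mul, pow_succ, mul_comm (2 ^ j) 2]
  · simp

lemma Upart_succ (M : ℕ) :
    UpartP (M + 1) = 1 + (X - 1) * (UpartP M).comp (X ^ 2) := by
  rw [UpartP, Finset.sum_range_succ', UpartP, sum_comp, Finset.mul_sum, mahlerFacP]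
  simp only [Finset.range_zero, Finset.prod_empty, pow_zero, mul_one]
  rw [add_comm (1 : ℚ[X])]
  congr 1
  refine Finset.sum_congr rfl fun n _ => ?_
  rw [mahler_succ, mul_comp, pow_comp]
  have : ((-1 : ℚ[X])).comp (X ^ 2) = -1 := by simp
  rw [this, pow_succ]
  ring

lemma taylor_Upart_succ (M : ℕ) :
    taylor 1 (UpartP (M + 1))
      = 1 + X * (taylor 1 (UpartP M)).comp (2 * X + X ^ 2) := by
  rw [Upart_succ, map_add, taylor_one, taylor_mul, map_sub, taylor_X, taylor_one]
  rw [taylor_apply, taylor_apply, comp_assoc, comp_assoc]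
  have h1 : (X + C (1:ℚ) - C 1) = X := by ring
  rw [h1]
  have h2 : ((X : ℚ[X]) ^ 2).comp (X + C 1) = ((X + C 1 : ℚ[X])).comp (2 * X + X ^ 2 : ℚ[X]) := by
    simp only [pow_comp, X_comp, add_comp, C_comp, one_comp, C_1]
    ring
  rw [h2, C_1]

lemma X_pow_dvd_taylor_mahler (n : ℕ) : (X : ℚ[X]) ^ n ∣ taylor 1 (mahlerFacP n) := by
  have hdvd : (X - 1 : ℚ[X]) ^ n ∣ mahlerFacP n := by
    rw [mahlerFacP]
    have hpow : (X - 1 : ℚ[X]) ^ n = ∏ _j ∈ Finset.range n, (X - 1 : ℚ[X]) := by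
      rw [Finset.prod_const, Finset.card_range]
    rw [hpow]
    refine Finset.prod_dvd_prod_of_dvd _ _ fun j _ => ?_
    have := sub_dvd_pow_sub_pow (X : ℚ[X]) 1 (2 ^ j)
    rw [one_pow] at this
    have h3 := dvd_neg.mpr this
    rwa [neg_sub] at h3
  obtain ⟨r, hr⟩ := hdvd
  refine ⟨taylor 1 r, ?_⟩
  rw [hr, taylor_mul]
  congr 1
  have : taylor (1:ℚ) ((X - 1) ^ n) = (taylor 1 (X - 1)) ^ n :=
    map_pow (taylorAlgHom (1:ℚ)) _ n
  rw [this, map_sub, taylor_X, taylor_one]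
  congr 1
  ring

lemma taylor_mahler_coeff_zero {n k : ℕ} (h : k < n) :
    (taylor 1 (mahlerFacP n)).coeff k = 0 :=
  coeff_zero_of_X_pow_dvd (X_pow_dvd_taylor_mahler n) h

lemma taylor_Upart_stable {k N : ℕ} (hN : k + 1 ≤ N) :
    (taylor 1 (UpartP N)).coeff k = (taylor 1 (UpartP (k + 1))).coeff k := by
  rw [UpartP, UpartP, map_sum, map_sum, finset_sum_coeff, finset_sum_coeff]
  refine (Finset.sum_subset (Finset.range_subset_range.mpr hN) ?_).symm
  intro n _ hn
  have hk : k < n := by simpa using Finset.mem_range.not.mp hn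
  have hC : (-1 : ℚ[X]) ^ n = C ((-1 : ℚ) ^ n) := by rw [map_pow, map_neg, C_1]
  rw [hC, taylor_mul, taylor_C, coeff_C_mul, taylor_mahler_coeff_zero hk, mul_zero]

lemma g_coeff_zero : ((2 * X + X ^ 2 : ℚ[X])).coeff 0 = 0 := by
  simp [coeff_X_pow]

lemma main_coeff (f : PowerSeries ℚ)
    (hf : f = 1 + PowerSeries.X * substPoly (2 * X + X ^ 2) f) (k : ℕ) :
    PowerSeries.coeff k f = (taylor 1 (UpartP (k + 1))).coeff k := by
  induction k using Nat.strong_induction_on with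
  | _ k ih =>
    match k with
    | 0 =>
      rw [hf]
      simp only [map_add, PowerSeries.coeff_zero_one]
      have : PowerSeries.coeff 0 (PowerSeries.X * substPoly (2 * X + X ^ 2) f) = 0 := by
        rw [PowerSeries.coeff_zero_eq_constantCoeff, map_mul, PowerSeries.constantCoeff_X,
          zero_mul]
      rw [this, add_zero, taylor_coeff_zero]
      have : UpartP 1 = 1 := by
        simp [UpartP, mahlerFacP]
      rw [this, eval_one]
    | m + 1 =>
      have lhs : PowerSeries.coeff (m + 1) f
          = ∑ j ∈ Finset.range (m + 1),
              PowerSeries.coeff j f * ((2 * X + X ^ 2 : ℚ[X]) ^ j).coeff m := by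
        conv_lhs => rw [hf]
        rw [map_add, PowerSeries.coeff_one, if_neg (Nat.succ_ne_zero m),
          PowerSeries.coeff_succ_X_mul, zero_add, substPoly, PowerSeries.coeff_mk]
      have rhs : (taylor 1 (UpartP (m + 1 + 1))).coeff (m + 1)
          = ∑ j ∈ Finset.range (m + 1),
              (taylor 1 (UpartP (m + 1))).coeff j * ((2 * X + X ^ 2 : ℚ[X]) ^ j).coeff m := by
        rw [taylor_Upart_succ, coeff_add, coeff_one, if_neg (Nat.succ_ne_zero m),
          coeff_X_mul, zero_add, coeff_comp_eq_sum _ _ g_coeff_zero]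
      rw [lhs, rhs]
      refine Finset.sum_congr rfl fun j hj => ?_
      have hjm : j < m + 1 := Finset.mem_range.mp hj
      rw [ih j hjm, taylor_Upart_stable (by omega : j + 1 ≤ m + 1)]

theorem stmt18 (f : PowerSeries ℚ)
    (hf : f = 1 + PowerSeries.X * substPoly (2 * X + X ^ 2) f)
    (k N : ℕ) (hN : k + 1 ≤ N) :
    (Nat.factorial k : ℚ) * PowerSeries.coeff k f
      = (derivative^[k] (UpartP N)).eval 1 := by
  rw [main_coeff f hf k, ← taylor_Upart_stable hN, taylor_coeff,
    ← Polynomial.factorial_smul_hasseDeriv (R := ℚ) k]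
  show (Nat.factorial k : ℚ) * (hasseDeriv k (UpartP N)).eval 1
      = ((k.factorial • hasseDeriv (R := ℚ) k) (UpartP N)).eval 1
  rw [LinearMap.smul_apply]
  rw [eval_smul]
  simp [nsmul_eq_mul]
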